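/- Let p be an odd prime, k a positive integer, q = p^k, and n = q - 1 (so n | q - 1 trivially). Let d = (q^{q-1} - 1)/(q - 1) + 1 and a ∈ F_{q^n} with a^{q-1} ∈ μ_n \ {1}. Then a^{-1}·x^d is a complete permutation polynomial of F_{q^n}: both a^{-1}x^d and a^{-1}x^d + x are bijections of F_{q^n}. -/

import Mathlib

open Finset

private lemma prod_range_mul_periodic {F : Type*} [CommMonoid F] (f : ℕ → F) (t r : ℕ)
    (hper : ∀ i, f (i + t) = f i) :
    ∏ i ∈ Finset.range (r * t), f i = (∏ i ∈ Finset.range t, f i) ^ r := by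
  have hshift : ∀ (r i : ℕ), f (r * t + i) = f i := by
    intro r
    induction r with
    | zero => simp
    | succ r ih =>
        intro i
        rw [Nat.succ_mul, add_assoc, add_comm t i, ← add_assoc, hper, ih]
  induction r with
  | zero => simp
  | succ r ih =>
      rw [Nat.succ_mul, Finset.prod_range_add, ih, pow_succ]
      congr 1
      exact Finset.prod_congr rfl fun i _ => hshift r i

private lemma prod_range_sub_mul_pow {F : Type*} [Field F] {b : F} {t : ℕ} (ht : 0 < t)
    (hb : IsPrimitiveRoot b t) (y c : F) :
    ∏ i ∈ Finset.range t, (y - c * b ^ i) = y ^ t - c ^ t := by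
  classical
  have himg : (Finset.range t).image (b ^ ·) = Polynomial.nthRootsFinset t (1 : F) := by
    apply Finset.eq_of_subset_of_card_le
    · intro x hx
      simp only [Finset.mem_image, Finset.mem_range] at hx
      obtain ⟨i, _, rfl⟩ := hx
      rw [Polynomial.mem_nthRootsFinset ht, ← pow_mul, mul_comm, pow_mul, hb.pow_eq_one,
        one_pow]
    · rw [hb.card_nthRootsFinset, Finset.card_image_of_injOn hb.injOn_pow, Finset.card_range]
  have h2 := hb.pow_sub_pow_eq_prod_sub_mul (x := y) (y := c) ht
  rw [h2, ← himg, Finset.prod_image]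
  · exact Finset.prod_congr rfl fun i _ => by ring
  · intro i hi j hj hij
    exact hb.injOn_pow (by simpa using hi) (by simpa using hj) hij

/-- CPP monomials with n = q - 1, d = (q^{q-1}-1)/(q-1)+1 and a^{q-1} ∈ μ_n \ {1}. -/
theorem cpp_monomial_n_eq_q_sub_one (p k : ℕ) (hp : p.Prime) (hodd : Odd p) (hk : 0 < k)
    {F : Type*} [Field F] [Fintype F]
    (q n : ℕ) (hq : q = p ^ k) (hn : n = q - 1)
    (hF : Fintype.card F = q ^ n)
    (d : ℕ) (hd : d = (q ^ (q - 1) - 1) / (q - 1) + 1)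
    (a : F) (ha1 : (a ^ (q - 1)) ^ n = 1) (ha2 : a ^ (q - 1) ≠ 1) :
    Function.Bijective (fun x : F => a⁻¹ * x ^ d) ∧
      Function.Bijective (fun x : F => a⁻¹ * x ^ d + x) := by
  -- numeric preliminaries
  have hq2 : 2 ≤ q := by
    rw [hq]
    calc 2 ≤ p := hp.two_le
    _ ≤ p ^ k := Nat.le_self_pow hk.ne' p
  have hqodd : Odd q := by rw [hq]; exact hodd.pow
  obtain ⟨m, hm⟩ := id hqodd
  have hq3 : 3 ≤ q := by omega
  have hqn : q = n + 1 := by omega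
  have hn2 : 2 ≤ n := by omega
  have hneven : Even n := ⟨m, by omega⟩
  have hn' : q - 1 = n := hn.symm
  rw [hn'] at ha1 ha2 hd
  set s : ℕ := ∑ i ∈ Finset.range n, q ^ i with hs
  have hsn : s * n = q ^ n - 1 := by
    have h := geom_sum_mul (q : ℤ) n
    have hq1 : ((q : ℤ) - 1) = (n : ℤ) := by push_cast [hqn]; ring
    rw [hq1] at h
    have hcast : ((s : ℤ)) = ∑ i ∈ Finset.range n, (q : ℤ) ^ i := by push_cast [hs]; rfl
    have h2 : ((s * n : ℕ) : ℤ) = (q : ℤ) ^ n - 1 := by rw [Nat.cast_mul, hcast]; exact h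
    rw [show ((q : ℤ)) ^ n = ((q ^ n : ℕ) : ℤ) by push_cast; ring] at h2
    have hpow : 1 ≤ q ^ n := Nat.one_le_pow _ _ (by omega)
    omega
  have hds : d = s + 1 := by
    rw [hd, ← hsn, Nat.mul_div_cancel s (by omega : 0 < n)]
  have hnds : n ∣ s := by
    haveI : NeZero n := ⟨by omega⟩
    have h0 : ((s : ZMod n)) = 0 := by
      rw [hs]
      push_cast
      have hq0 : (q : ZMod n) = 1 := by
        rw [hqn]; push_cast; simp
      simp [hq0]
    exact (ZMod.natCast_eq_zero_iff s n).mp h0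
  -- characteristic
  have hchar : CharP F p := by
    have h1 : CharP F (ringChar F) := ringChar.charP F
    obtain ⟨j, hj, hcard⟩ := FiniteField.card F (ringChar F)
    have hrp : ringChar F = p := by
      have hdvd : ringChar F ∣ q ^ n := by
        rw [← hF, hcard]; exact dvd_pow_self _ (by exact_mod_cast j.ne_zero)
      rw [hq, ← pow_mul] at hdvd
      have h2 := hj.dvd_of_dvd_pow hdvd
      exact (Nat.prime_dvd_prime_iff_eq hj hp).mp h2
    rwa [hrp] at h1
  haveI := hchar
  haveI : Fact p.Prime := ⟨hp⟩
  have frobadd : ∀ (x y : F) (i : ℕ), (x + y) ^ q ^ i = x ^ q ^ i + y ^ q ^ i := by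
    intro x y i
    rw [hq, ← pow_mul]
    exact add_pow_char_pow x y p (k * i)
  have frobsub : ∀ (x y : F), (x - y) ^ q = x ^ q - y ^ q := by
    intro x y
    rw [hq]
    exact sub_pow_char_pow x y k
  -- the element b and its order t
  have ha0 : a ≠ 0 := by
    intro h
    rw [h, zero_pow (by omega : n ≠ 0), zero_pow (by omega : n ≠ 0)] at ha1
    exact zero_ne_one ha1
  set b := a ^ n with hb
  have hb0 : b ≠ 0 := pow_ne_zero _ ha0
  have hbn : b ^ n = 1 := ha1
  have hbq : b ^ q = b := by rw [hqn, pow_succ, hbn, one_mul]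
  have haq : a ^ q = a * b := by rw [hqn, pow_succ, ← hb, mul_comm]
  have haqi : ∀ i : ℕ, a ^ q ^ i = a * b ^ i := by
    intro i
    induction i with
    | zero => simp
    | succ i ih =>
        calc a ^ q ^ (i + 1) = (a ^ q ^ i) ^ q := by rw [← pow_mul, pow_succ]
        _ = (a * b ^ i) ^ q := by rw [ih]
        _ = a ^ q * (b ^ q) ^ i := by rw [mul_pow, ← pow_mul, mul_comm i q, pow_mul]
        _ = a * b ^ (i + 1) := by rw [haq, hbq]; ring
  have hfix : ∀ y : F, y ^ n = 1 → ∀ i : ℕ, y ^ q ^ i = y := by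
    intro y hy i
    have hdvd : n ∣ q ^ i - 1 := by
      have h2 := Nat.sub_dvd_pow_sub_pow q 1 i
      simpa [hn'] using h2
    obtain ⟨m', hm'⟩ := hdvd
    have hq1 : 1 ≤ q ^ i := Nat.one_le_pow _ _ (by omega)
    calc y ^ q ^ i = y ^ (1 + (q ^ i - 1)) := by congr 1; omega
    _ = y * (y ^ n) ^ m' := by rw [pow_add, pow_one, ← pow_mul, ← hm']
    _ = y := by rw [hy, one_pow, mul_one]
  set t := orderOf b with htdef
  have hfin : IsOfFinOrder b := isOfFinOrder_iff_pow_eq_one.mpr ⟨n, by omega, hbn⟩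
  have ht0 : 0 < t := hfin.orderOf_pos
  have htdvd : t ∣ n := orderOf_dvd_of_pow_eq_one hbn
  have hprim : IsPrimitiveRoot b t := IsPrimitiveRoot.orderOf b
  have hbt : b ^ t = 1 := pow_orderOf_eq_one b
  set e := (-a) ^ t with he
  set r := n / t with hr
  have hrt : r * t = n := Nat.div_mul_cancel htdvd
  -- nonvanishing of factors
  have hfac : ∀ (y : F), y ^ n = 1 → ∀ i : ℕ, y + a * b ^ i ≠ 0 := by
    intro y hy i h
    have hy' : y = -(a * b ^ i) := by linear_combination h
    apply ha2
    calc b = b * (b ^ n) ^ i := by rw [hbn, one_pow, mul_one]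
    _ = (a * b ^ i) ^ n := by rw [mul_pow, ← hb, ← pow_mul, mul_comm n i, pow_mul]
    _ = (-(a * b ^ i)) ^ n := (hneven.neg_pow _).symm
    _ = y ^ n := by rw [hy']
    _ = 1 := hy
  have hroot : ∀ y : F, y ^ t - e = ∏ i ∈ Finset.range t, (y + a * b ^ i) := by
    intro y
    have h2 := prod_range_sub_mul_pow ht0 hprim y (-a)
    rw [he, ← h2]
    exact Finset.prod_congr rfl fun i _ => by ring
  have hyte : ∀ y : F, y ^ n = 1 → y ^ t - e ≠ 0 := by
    intro y hy
    rw [hroot y]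
    exact Finset.prod_ne_zero_iff.mpr fun i _ => hfac y hy i
  -- the key norm formula
  have key : ∀ y : F, y ^ n = 1 → (y + a) ^ s = (y ^ t - e) ^ r := by
    intro y hy
    have h1 : (y + a) ^ s = ∏ i ∈ Finset.range n, (y + a * b ^ i) := by
      rw [hs, ← Finset.prod_pow_eq_pow_sum]
      exact Finset.prod_congr rfl fun i _ => by rw [frobadd y a i, hfix y hy i, haqi i]
    rw [h1, ← hrt,
      prod_range_mul_periodic _ t r (fun i => by rw [pow_add, hbt, mul_one])]
    rw [hroot y]
  -- y^t - e lies in the subfield F_q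
  have hsubK : ∀ y : F, y ^ n = 1 → (y ^ t - e) ^ n = 1 := by
    intro y hy
    have heq : (y ^ t - e) ^ q = y ^ t - e := by
      rw [frobsub]
      congr 1
      · rw [← pow_mul, mul_comm t q, pow_mul]
        have := hfix y hy 1
        rw [pow_one] at this
        rw [this]
      · rw [he, ← pow_mul, mul_comm t q, pow_mul]
        have hnaq : (-a) ^ q = -(a * b) := by
          rw [hqodd.neg_pow, haq]
        rw [hnaq, neg_mul_eq_neg_mul, mul_pow, hbt, mul_one]
    have hz0 : y ^ t - e ≠ 0 := hyte y hy
    have : (y ^ t - e) ^ n * (y ^ t - e) = y ^ t - e := by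
      rw [← pow_succ, ← hqn, heq]
    have h2 := mul_right_cancel₀ hz0 (this.trans (one_mul _).symm)
    exact h2
  -- injectivity of ψ on μ_n
  have hpsi : ∀ y₁ y₂ : F, y₁ ^ n = 1 → y₂ ^ n = 1 →
      y₁ * (y₁ + a) ^ s = y₂ * (y₂ + a) ^ s → y₁ = y₂ := by
    intro y₁ y₂ h₁ h₂ heq
    rw [key y₁ h₁, key y₂ h₂] at heq
    have ht' : y₁ ^ t = y₂ ^ t := by
      have h4 : ∀ y : F, y ^ n = 1 → ((y ^ t - e) ^ r) ^ t = 1 := fun y hy => by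
        rw [← pow_mul, hrt]; exact hsubK y hy
      calc y₁ ^ t = (y₁ * (y₁ ^ t - e) ^ r) ^ t := by rw [mul_pow, h4 y₁ h₁, mul_one]
      _ = (y₂ * (y₂ ^ t - e) ^ r) ^ t := by rw [heq]
      _ = y₂ ^ t := by rw [mul_pow, h4 y₂ h₂, mul_one]
    rw [ht'] at heq
    exact mul_right_cancel₀ (pow_ne_zero _ (hyte y₂ h₂)) heq
  -- μ_n membership of x^s
  have hkQ : Fintype.card F - 1 = s * n := by rw [hF, ← hsn]
  have hmu : ∀ x : F, x ≠ 0 → (x ^ s) ^ n = 1 := by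
    intro x hx
    rw [← pow_mul, ← hkQ]
    exact FiniteField.pow_card_sub_one_eq_one x hx
  -- part 1: coprimality and bijectivity of the monomial
  have hcop : Nat.Coprime d (Fintype.card F - 1) := by
    rw [hds, hkQ]
    have h1 : Nat.Coprime (s + 1) s := by
      simp [Nat.Coprime, Nat.gcd_self_add_left s 1]
    exact h1.mul_right (Nat.Coprime.coprime_dvd_right hnds h1)
  have hQ2 : 1 < Fintype.card F - 1 := by
    have h9 : 3 ^ 2 ≤ q ^ n := Nat.pow_le_pow_left hq3 2 |>.trans (Nat.pow_le_pow_right (by omega) hn2)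
    rw [hF]; omega
  obtain ⟨w, _, hw⟩ := Nat.exists_mul_mod_eq_one_of_coprime hcop hQ2
  have hdw : d * w = (Fintype.card F - 1) * (d * w / (Fintype.card F - 1)) + 1 := by
    have h4 := Nat.div_add_mod (d * w) (Fintype.card F - 1)
    omega
  have hinvpow : ∀ x : F, (x ^ d) ^ w = x := by
    intro x
    rcases eq_or_ne x 0 with rfl | hx
    · rw [← pow_mul]
      exact zero_pow (by omega)
    · rw [← pow_mul, hdw, pow_add, pow_one, pow_mul,
        FiniteField.pow_card_sub_one_eq_one x hx, one_pow, one_mul]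
  have hinj1 : Function.Injective (fun x : F => a⁻¹ * x ^ d) := by
    intro x₁ x₂ h
    simp only at h
    have h' : x₁ ^ d = x₂ ^ d := mul_left_cancel₀ (inv_ne_zero ha0) h
    rw [← hinvpow x₁, ← hinvpow x₂, h']
  -- part 2
  have hg : ∀ x : F, a⁻¹ * x ^ d + x = x * (a⁻¹ * x ^ s + 1) := by
    intro x
    rw [hds, pow_succ]
    ring
  have hfac2 : ∀ x : F, x ≠ 0 → a⁻¹ * x ^ s + 1 ≠ 0 := by
    intro x hx h
    have hxs : x ^ s = -a := by
      have := congrArg (fun z => a * z) h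
      field_simp at this
      linear_combination this
    have h1 : ((x ^ s)) ^ n = 1 := hmu x hx
    rw [hxs, hneven.neg_pow] at h1
    exact ha2 h1
  have hinj2 : Function.Injective (fun x : F => a⁻¹ * x ^ d + x) := by
    intro x₁ x₂ h
    simp only [hg] at h
    rcases eq_or_ne x₁ 0 with rfl | h₁
    · rcases eq_or_ne x₂ 0 with rfl | h₂
      · rfl
      · exact absurd h.symm (by simpa using mul_ne_zero h₂ (hfac2 x₂ h₂))
    · rcases eq_or_ne x₂ 0 with rfl | h₂
      · exact absurd h (by simpa using mul_ne_zero h₁ (hfac2 x₁ h₁))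
      · have hs1 : x₁ ^ s = x₂ ^ s := by
          apply hpsi _ _ (hmu x₁ h₁) (hmu x₂ h₂)
          have h3 := congrArg (· ^ s) h
          simp only [mul_pow] at h3
          have hrw : ∀ x : F, (a⁻¹ * x ^ s + 1) = a⁻¹ * (x ^ s + a) := by
            intro x; field_simp
          rw [hrw x₁, hrw x₂, mul_pow, mul_pow] at h3
          have hne : (a⁻¹ : F) ^ s ≠ 0 := pow_ne_zero _ (inv_ne_zero ha0)
          apply mul_left_cancel₀ hne
          linear_combination h3
        rw [hs1] at h
        exact mul_right_cancel₀ (hfac2 x₂ h₂) h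
  exact ⟨Finite.injective_iff_bijective.mp hinj1, Finite.injective_iff_bijective.mp hinj2⟩
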